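/- Let the pairs (S_{1,i},S_{2,i}), i = 1,…,n, be i.i.d. finite-valued, let M1, M2 be finite-valued random variables that are mutually independent and jointly independent of (S1^n,S2^n), and let M12 = f12(M1,S1^n) and M21 = f21(M2,M12,S2^n) for deterministic functions f12, f21. Then for every i ∈ {1,…,n}, M21 is conditionally independent of S_{1,i} given (S_{2,i}, M12, S1^{i−1}, S2_{i+1}^n); that is, the Markov chain M21 − (S_{2,i}, M12, S1^{i−1}, S2_{i+1}^n) − S_{1,i} holds. -/

import Mathlib

open scoped BigOperators Classical
open Finset

namespace Paper

variable {Ω : Type} [Fintype Ω]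

/-- `pr μ X a` is the probability that the random variable `X` takes the value `a`
under the pmf `μ` on the finite sample space `Ω`. -/
noncomputable def pr {A : Type} (μ : Ω → ℝ) (X : Ω → A) (a : A) : ℝ :=
  ∑ ω, if X ω = a then μ ω else 0

/-- `μ` is a probability mass function on the finite space `Ω`. -/
def IsPMF (μ : Ω → ℝ) : Prop := (∀ ω, 0 ≤ μ ω) ∧ ∑ ω, μ ω = 1

/-- Shannon entropy (in bits) of the random variable `X` under `μ`. -/
noncomputable def ent {A : Type} [Fintype A] (μ : Ω → ℝ) (X : Ω → A) : ℝ :=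
  -∑ a, pr μ X a * Real.logb 2 (pr μ X a)

/-- Mutual information `I(X;Y)` (in bits) under `μ`. -/
noncomputable def mi {A B : Type} [Fintype A] [Fintype B] (μ : Ω → ℝ)
    (X : Ω → A) (Y : Ω → B) : ℝ :=
  ent μ X + ent μ Y - ent μ (fun ω => (X ω, Y ω))

/-- Conditional mutual information `I(X;Y|Z)` (in bits) under `μ`. -/
noncomputable def cmi {A B C : Type} [Fintype A] [Fintype B] [Fintype C] (μ : Ω → ℝ)
    (X : Ω → A) (Y : Ω → B) (Z : Ω → C) : ℝ :=
  ent μ (fun ω => (X ω, Z ω)) + ent μ (fun ω => (Y ω, Z ω))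
    - ent μ (fun ω => (X ω, Y ω, Z ω)) - ent μ Z

/-- `X` and `Y` are conditionally independent given `Z` under `μ`:
`P(X = a, Y = b | Z = c) = P(X = a | Z = c) · P(Y = b | Z = c)`
whenever `P(Z = c) ≠ 0`. -/
def CondIndep {A B C : Type} (μ : Ω → ℝ) (X : Ω → A) (Y : Ω → B) (Z : Ω → C) : Prop :=
  ∀ a b c, pr μ Z c ≠ 0 →
    pr μ (fun ω => (X ω, Y ω, Z ω)) (a, b, c) * pr μ Z c
      = pr μ (fun ω => (X ω, Z ω)) (a, c) * pr μ (fun ω => (Y ω, Z ω)) (b, c)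


lemma pr_comp {Ω : Type} [Fintype Ω] {τ A : Type} [Fintype τ] (μ : Ω → ℝ) (T : Ω → τ)
    (g : τ → A) (a : A) :
    pr μ (fun ω => g (T ω)) a = ∑ t, if g t = a then pr μ T t else 0 := by
  unfold pr
  have key : ∀ t : τ, (if g t = a then ∑ ω, if T ω = t then μ ω else 0 else 0)
      = ∑ ω, if g t = a ∧ T ω = t then μ ω else 0 := by
    intro t
    by_cases h : g t = a <;> simp [h]
  simp only [key]
  rw [Finset.sum_comm]
  refine Finset.sum_congr rfl fun ω _ => ?_
  rw [Finset.sum_eq_single (T ω)]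
  · simp
  · intro t _ ht
    rw [if_neg]
    rintro ⟨-, h⟩
    exact ht h.symm
  · simp

lemma prod_split {n : ℕ} (i : Fin n) (F : Fin n → ℝ) :
    ∏ j, F j = (∏ j : {j : Fin n // j < i}, F j.1) * (F i * ∏ j : {j : Fin n // i < j}, F j.1) := by
  classical
  rw [← Finset.prod_filter_mul_prod_filter_not univ (fun j => j < i) F]
  have h1 : ∏ j ∈ univ.filter (fun j => j < i), F j = ∏ j : {j : Fin n // j < i}, F j.1 := by
    rw [← Finset.prod_subtype (univ.filter (fun j => j < i)) (fun j => by simp) F]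
  have h2 : univ.filter (fun j : Fin n => ¬ j < i) = insert i (univ.filter (fun j => i < j)) := by
    ext j
    simp only [mem_filter, mem_univ, true_and, mem_insert, Fin.lt_def, not_lt, Fin.ext_iff]
    omega
  have h3 : ∏ j ∈ univ.filter (fun j : Fin n => ¬ j < i), F j
      = F i * ∏ j : {j : Fin n // i < j}, F j.1 := by
    rw [h2, Finset.prod_insert (by simp)]
    rw [← Finset.prod_subtype (univ.filter (fun j => i < j)) (fun j => by simp) F]
  rw [h1, h3]

def mergeFn {n : ℕ} (i : Fin n) {α : Type} (L : {j : Fin n // j < i} → α) (x : α)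
    (R : {j : Fin n // i < j} → α) : Fin n → α :=
  fun j => if h : j < i then L ⟨j, h⟩ else if h : i < j then R ⟨j, h⟩ else x

@[simp] lemma mergeFn_lt {n : ℕ} {i : Fin n} {α : Type} (L : {j : Fin n // j < i} → α) (x : α)
    (R : {j : Fin n // i < j} → α) (j : {j : Fin n // j < i}) : mergeFn i L x R j.1 = L j := by
  simp [mergeFn, j.2]

@[simp] lemma mergeFn_self {n : ℕ} {i : Fin n} {α : Type} (L : {j : Fin n // j < i} → α) (x : α)
    (R : {j : Fin n // i < j} → α) : mergeFn i L x R i = x := by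
  simp [mergeFn]

@[simp] lemma mergeFn_gt {n : ℕ} {i : Fin n} {α : Type} (L : {j : Fin n // j < i} → α) (x : α)
    (R : {j : Fin n // i < j} → α) (j : {j : Fin n // i < j}) : mergeFn i L x R j.1 = R j := by
  have h1 : ¬ j.1 < i := not_lt.mpr (le_of_lt j.2)
  simp [mergeFn, h1, j.2]

lemma mergeFn_fst {n : ℕ} (i : Fin n) {α β : Type}
    (L1 : {j : Fin n // j < i} → α) (L2 : {j : Fin n // j < i} → β) (x1 : α) (x2 : β)
    (R1 : {j : Fin n // i < j} → α) (R2 : {j : Fin n // i < j} → β) :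
    (fun j => (mergeFn i (fun j => (L1 j, L2 j)) (x1, x2) (fun j => (R1 j, R2 j)) j).1)
      = mergeFn i L1 x1 R1 := by
  funext j
  rcases lt_trichotomy j i with h | h | h
  · have := mergeFn_lt (fun j : {j : Fin n // j < i} => (L1 j, L2 j)) (x1, x2)
      (fun j : {j : Fin n // i < j} => (R1 j, R2 j)) ⟨j, h⟩
    simp only [this]
    exact (mergeFn_lt L1 x1 R1 ⟨j, h⟩).symm
  · subst h; simp
  · have := mergeFn_gt (fun j : {j : Fin n // j < i} => (L1 j, L2 j)) (x1, x2)
      (fun j : {j : Fin n // i < j} => (R1 j, R2 j)) ⟨j, h⟩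
    simp only [this]
    exact (mergeFn_gt L1 x1 R1 ⟨j, h⟩).symm

lemma mergeFn_snd {n : ℕ} (i : Fin n) {α β : Type}
    (L1 : {j : Fin n // j < i} → α) (L2 : {j : Fin n // j < i} → β) (x1 : α) (x2 : β)
    (R1 : {j : Fin n // i < j} → α) (R2 : {j : Fin n // i < j} → β) :
    (fun j => (mergeFn i (fun j => (L1 j, L2 j)) (x1, x2) (fun j => (R1 j, R2 j)) j).2)
      = mergeFn i L2 x2 R2 := by
  funext j
  rcases lt_trichotomy j i with h | h | h
  · have := mergeFn_lt (fun j : {j : Fin n // j < i} => (L1 j, L2 j)) (x1, x2)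
      (fun j : {j : Fin n // i < j} => (R1 j, R2 j)) ⟨j, h⟩
    simp only [this]
    exact (mergeFn_lt L2 x2 R2 ⟨j, h⟩).symm
  · subst h; simp
  · have := mergeFn_gt (fun j : {j : Fin n // j < i} => (L1 j, L2 j)) (x1, x2)
      (fun j : {j : Fin n // i < j} => (R1 j, R2 j)) ⟨j, h⟩
    simp only [this]
    exact (mergeFn_gt L2 x2 R2 ⟨j, h⟩).symm

noncomputable def bigEquiv {n : ℕ} (i : Fin n) (𝒮₁ 𝒮₂ ℳ₁ ℳ₂ : Type) :
    ((ℳ₂ × ({j : Fin n // j < i} → 𝒮₂) × ({j : Fin n // j < i} → 𝒮₁))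
      × (ℳ₁ × 𝒮₁ × ({j : Fin n // i < j} → 𝒮₁) × 𝒮₂ × ({j : Fin n // i < j} → 𝒮₂)))
      ≃ (ℳ₁ × ℳ₂ × (Fin n → 𝒮₁ × 𝒮₂)) where
  toFun u := (u.2.1, u.1.1,
    mergeFn i (fun j => (u.1.2.2 j, u.1.2.1 j)) (u.2.2.1, u.2.2.2.2.1)
      (fun j => (u.2.2.2.1 j, u.2.2.2.2.2 j)))
  invFun t := ((t.2.1, fun j => (t.2.2 j.1).2, fun j => (t.2.2 j.1).1),
    (t.1, (t.2.2 i).1, fun j => (t.2.2 j.1).1, (t.2.2 i).2, fun j => (t.2.2 j.1).2))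
  left_inv := by
    rintro ⟨⟨m2, L2, L1⟩, ⟨m1, x1, R1, x2, R2⟩⟩
    simp only [mergeFn_lt, mergeFn_self, mergeFn_gt]
  right_inv := by
    rintro ⟨m1, m2, s⟩
    simp only [Prod.mk.injEq, eq_self_iff_true, true_and]
    funext j
    rcases lt_trichotomy j i with h | h | h
    · have := mergeFn_lt (i := i) (fun j : {j : Fin n // j < i} => ((s j.1).1, (s j.1).2))
        ((s i).1, (s i).2) (fun j : {j : Fin n // i < j} => ((s j.1).1, (s j.1).2)) ⟨j, h⟩
      simpa using this
    · subst h
      simp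
    · have := mergeFn_gt (i := i) (fun j : {j : Fin n // j < i} => ((s j.1).1, (s j.1).2))
        ((s i).1, (s i).2) (fun j : {j : Fin n // i < j} => ((s j.1).1, (s j.1).2)) ⟨j, h⟩
      simpa using this

lemma split_sum {n : ℕ} {𝒮₁ 𝒮₂ ℳ₁ ℳ₂ ℳ₁₂ ℳ₂₁ : Type}
    [Fintype 𝒮₁] [Fintype 𝒮₂] [Fintype ℳ₁] [Fintype ℳ₂]
    (i : Fin n) (P1 : ℳ₁ → ℝ) (P2 : ℳ₂ → ℝ) (q : 𝒮₁ × 𝒮₂ → ℝ)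
    (f12 : ℳ₁ → (Fin n → 𝒮₁) → ℳ₁₂) (f21 : ℳ₂ → ℳ₁₂ → (Fin n → 𝒮₂) → ℳ₂₁)
    (b' : ℳ₂₁ → Prop) (a' : 𝒮₁ → Prop)
    (c1 : 𝒮₂) (c2 : ℳ₁₂) (c3 : {j : Fin n // j < i} → 𝒮₁) (c4 : {j : Fin n // i < j} → 𝒮₂) :
    (∑ t : ℳ₁ × ℳ₂ × (Fin n → 𝒮₁ × 𝒮₂),
      if (b' (f21 t.2.1 (f12 t.1 fun j => (t.2.2 j).1) fun j => (t.2.2 j).2)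
          ∧ a' (t.2.2 i).1
          ∧ (t.2.2 i).2 = c1 ∧ f12 t.1 (fun j => (t.2.2 j).1) = c2
          ∧ (fun j : {j : Fin n // j < i} => (t.2.2 j.1).1) = c3
          ∧ (fun j : {j : Fin n // i < j} => (t.2.2 j.1).2) = c4)
        then P1 t.1 * P2 t.2.1 * ∏ j, q (t.2.2 j) else 0)
    = (∑ m2, ∑ L2 : {j : Fin n // j < i} → 𝒮₂,
        if b' (f21 m2 c2 (mergeFn i L2 c1 c4)) then P2 m2 * ∏ j, q (c3 j, L2 j) else 0)
    * (∑ m1, ∑ x1 : 𝒮₁, ∑ R1 : {j : Fin n // i < j} → 𝒮₁,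
        if a' x1 ∧ f12 m1 (mergeFn i c3 x1 R1) = c2
          then P1 m1 * (q (x1, c1) * ∏ j, q (R1 j, c4 j)) else 0) := by
  classical
  rw [← Equiv.sum_comp (bigEquiv i 𝒮₁ 𝒮₂ ℳ₁ ℳ₂)]
  rw [Fintype.sum_prod_type]
  have hpoint : ∀ (v : ℳ₂ × ({j : Fin n // j < i} → 𝒮₂) × ({j : Fin n // j < i} → 𝒮₁))
      (w : ℳ₁ × 𝒮₁ × ({j : Fin n // i < j} → 𝒮₁) × 𝒮₂ × ({j : Fin n // i < j} → 𝒮₂)),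
      (fun t : ℳ₁ × ℳ₂ × (Fin n → 𝒮₁ × 𝒮₂) =>
        if (b' (f21 t.2.1 (f12 t.1 fun j => (t.2.2 j).1) fun j => (t.2.2 j).2)
            ∧ a' (t.2.2 i).1
            ∧ (t.2.2 i).2 = c1 ∧ f12 t.1 (fun j => (t.2.2 j).1) = c2
            ∧ (fun j : {j : Fin n // j < i} => (t.2.2 j.1).1) = c3
            ∧ (fun j : {j : Fin n // i < j} => (t.2.2 j.1).2) = c4)
          then P1 t.1 * P2 t.2.1 * ∏ j, q (t.2.2 j) else 0) (bigEquiv i 𝒮₁ 𝒮₂ ℳ₁ ℳ₂ (v, w))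
      = (if v.2.2 = c3 then
            (if b' (f21 v.1 c2 (mergeFn i v.2.1 c1 c4))
              then P2 v.1 * ∏ j, q (c3 j, v.2.1 j) else 0)
          else 0)
        * (if w.2.2.2.1 = c1 ∧ w.2.2.2.2 = c4 then
            (if a' w.2.1 ∧ f12 w.1 (mergeFn i c3 w.2.1 w.2.2.1) = c2
              then P1 w.1 * (q (w.2.1, c1) * ∏ j, q (w.2.2.1 j, c4 j)) else 0)
          else 0) := by
    rintro ⟨m2, L2, L1⟩ ⟨m1, x1, R1, x2, R2⟩
    simp only [bigEquiv, Equiv.coe_fn_mk]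
    have hA : (fun j : {j : Fin n // j < i} =>
        ((mergeFn i (fun j => (L1 j, L2 j)) (x1, x2) (fun j => (R1 j, R2 j))) j.1).1) = L1 := by
      funext j; rw [mergeFn_lt]
    have hB : (fun j : {j : Fin n // i < j} =>
        ((mergeFn i (fun j => (L1 j, L2 j)) (x1, x2) (fun j => (R1 j, R2 j))) j.1).2) = R2 := by
      funext j; rw [mergeFn_gt]
    have hmid : mergeFn i (fun j => (L1 j, L2 j)) (x1, x2) (fun j => (R1 j, R2 j)) i
        = (x1, x2) := mergeFn_self _ _ _
    have hprod : ∏ j, q (mergeFn i (fun j => (L1 j, L2 j)) (x1, x2) (fun j => (R1 j, R2 j)) j)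
        = (∏ j : {j : Fin n // j < i}, q (L1 j, L2 j))
          * (q (x1, x2) * ∏ j : {j : Fin n // i < j}, q (R1 j, R2 j)) := by
      rw [prod_split i (fun j =>
        q (mergeFn i (fun j => (L1 j, L2 j)) (x1, x2) (fun j => (R1 j, R2 j)) j))]
      simp only [mergeFn_lt, mergeFn_self, mergeFn_gt]
    simp only [mergeFn_fst i L1 L2 x1 x2 R1 R2, mergeFn_snd i L1 L2 x1 x2 R1 R2, hA, hB, hmid, hprod]
    by_cases hL : L1 = c3
    · subst hL
      by_cases hx : x2 = c1
      · subst hx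
        by_cases hR : R2 = c4
        · subst hR
          by_cases h2 : f12 m1 (mergeFn i L1 x1 R1) = c2
          · by_cases hb : b' (f21 m2 c2 (mergeFn i L2 x2 R2)) <;>
              by_cases ha : a' x1 <;>
              simp [h2, hb, ha] <;> ring
          · simp [h2]
        · simp [hR]
      · simp [hx]
    · simp [hL]
  calc
    (∑ v : ℳ₂ × ({j : Fin n // j < i} → 𝒮₂) × ({j : Fin n // j < i} → 𝒮₁),
      ∑ w : ℳ₁ × 𝒮₁ × ({j : Fin n // i < j} → 𝒮₁) × 𝒮₂ × ({j : Fin n // i < j} → 𝒮₂),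
      (fun t : ℳ₁ × ℳ₂ × (Fin n → 𝒮₁ × 𝒮₂) =>
        if (b' (f21 t.2.1 (f12 t.1 fun j => (t.2.2 j).1) fun j => (t.2.2 j).2)
            ∧ a' (t.2.2 i).1
            ∧ (t.2.2 i).2 = c1 ∧ f12 t.1 (fun j => (t.2.2 j).1) = c2
            ∧ (fun j : {j : Fin n // j < i} => (t.2.2 j.1).1) = c3
            ∧ (fun j : {j : Fin n // i < j} => (t.2.2 j.1).2) = c4)
          then P1 t.1 * P2 t.2.1 * ∏ j, q (t.2.2 j) else 0) (bigEquiv i 𝒮₁ 𝒮₂ ℳ₁ ℳ₂ (v, w)))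
    = ∑ v : ℳ₂ × ({j : Fin n // j < i} → 𝒮₂) × ({j : Fin n // j < i} → 𝒮₁),
      ∑ w : ℳ₁ × 𝒮₁ × ({j : Fin n // i < j} → 𝒮₁) × 𝒮₂ × ({j : Fin n // i < j} → 𝒮₂),
        (if v.2.2 = c3 then
            (if b' (f21 v.1 c2 (mergeFn i v.2.1 c1 c4))
              then P2 v.1 * ∏ j, q (c3 j, v.2.1 j) else 0)
          else 0)
        * (if w.2.2.2.1 = c1 ∧ w.2.2.2.2 = c4 then
            (if a' w.2.1 ∧ f12 w.1 (mergeFn i c3 w.2.1 w.2.2.1) = c2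
              then P1 w.1 * (q (w.2.1, c1) * ∏ j, q (w.2.2.1 j, c4 j)) else 0)
          else 0) := by
      refine Finset.sum_congr rfl fun v _ => Finset.sum_congr rfl fun w _ => hpoint v w
    _ = _ := by
      rw [← Finset.sum_mul_sum]
      congr 1
      · rw [Fintype.sum_prod_type]
        refine Finset.sum_congr rfl fun m2 _ => ?_
        rw [Fintype.sum_prod_type]
        refine Finset.sum_congr rfl fun L2 _ => ?_
        simp [Finset.sum_ite_eq']
      · rw [Fintype.sum_prod_type]
        refine Finset.sum_congr rfl fun m1 _ => ?_
        rw [Fintype.sum_prod_type]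
        refine Finset.sum_congr rfl fun x1 _ => ?_
        rw [Fintype.sum_prod_type]
        refine Finset.sum_congr rfl fun R1 _ => ?_
        rw [Fintype.sum_prod_type]
        simp [ite_and, Finset.sum_ite_eq']

/-- Markov chain (45) in the converse of Theorem 2: with `(S₁ᵢ,S₂ᵢ)` i.i.d., `M₁,M₂`
mutually independent and independent of the states, `M₁₂ = f₁₂(M₁,S₁ⁿ)` and
`M₂₁ = f₂₁(M₂,M₁₂,S₂ⁿ)`, for every `i` the chain
`M₂₁ − (S₂ᵢ, M₁₂, S₁ⁱ⁻¹, S₂ᵢ₊₁ⁿ) − S₁ᵢ` holds. -/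
theorem markov_chain_M21
    {Ω : Type} [Fintype Ω] (μ : Ω → ℝ) (hμ : IsPMF μ)
    {n : ℕ} {𝒮₁ 𝒮₂ ℳ₁ ℳ₂ ℳ₁₂ ℳ₂₁ : Type}
    [Fintype 𝒮₁] [Fintype 𝒮₂] [Fintype ℳ₁] [Fintype ℳ₂] [Fintype ℳ₁₂] [Fintype ℳ₂₁]
    (S1 : Fin n → Ω → 𝒮₁) (S2 : Fin n → Ω → 𝒮₂) (M1 : Ω → ℳ₁) (M2 : Ω → ℳ₂)
    (q : 𝒮₁ × 𝒮₂ → ℝ) (hq : IsPMF q)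
    (hiid : ∀ s : Fin n → 𝒮₁ × 𝒮₂,
      pr μ (fun ω => fun i => (S1 i ω, S2 i ω)) s = ∏ i, q (s i))
    (hindep : ∀ (m1 : ℳ₁) (m2 : ℳ₂) (s : Fin n → 𝒮₁ × 𝒮₂),
      pr μ (fun ω => (M1 ω, M2 ω, fun i => (S1 i ω, S2 i ω))) (m1, m2, s)
        = pr μ M1 m1 * pr μ M2 m2 * pr μ (fun ω => fun i => (S1 i ω, S2 i ω)) s)
    (f12 : ℳ₁ → (Fin n → 𝒮₁) → ℳ₁₂)
    (f21 : ℳ₂ → ℳ₁₂ → (Fin n → 𝒮₂) → ℳ₂₁)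
    (M12 : Ω → ℳ₁₂) (hM12 : ∀ ω, M12 ω = f12 (M1 ω) (fun i => S1 i ω))
    (M21 : Ω → ℳ₂₁) (hM21 : ∀ ω, M21 ω = f21 (M2 ω) (M12 ω) (fun i => S2 i ω)) :
    ∀ i : Fin n,
      CondIndep μ M21 (S1 i)
        (fun ω => (S2 i ω, M12 ω, (fun j : {j : Fin n // j < i} => S1 j.1 ω),
          (fun j : {j : Fin n // i < j} => S2 j.1 ω))) := by
  intro i a b c hc
  obtain ⟨c1, c2, c3, c4⟩ := c
  clear hc
  beta_reduce
  set T : Ω → ℳ₁ × ℳ₂ × (Fin n → 𝒮₁ × 𝒮₂) :=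
    fun ω => (M1 ω, M2 ω, fun j => (S1 j ω, S2 j ω)) with hTdef
  have hT : ∀ t : ℳ₁ × ℳ₂ × (Fin n → 𝒮₁ × 𝒮₂),
      pr μ T t = pr μ M1 t.1 * pr μ M2 t.2.1 * ∏ j, q (t.2.2 j) := by
    rintro ⟨m1, m2, s⟩
    show pr μ (fun ω => (M1 ω, M2 ω, fun j => (S1 j ω, S2 j ω))) (m1, m2, s) = _
    rw [hindep, hiid]
  -- the four probabilities, expressed as sums over the joint range of (M1, M2, S)
  have p1 : pr μ (fun ω => (M21 ω, S1 i ω, S2 i ω, M12 ω,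
        (fun j : {j : Fin n // j < i} => S1 j.1 ω), (fun j : {j : Fin n // i < j} => S2 j.1 ω)))
      (a, b, c1, c2, c3, c4)
      = ∑ t : ℳ₁ × ℳ₂ × (Fin n → 𝒮₁ × 𝒮₂),
        if ((f21 t.2.1 (f12 t.1 fun j => (t.2.2 j).1) fun j => (t.2.2 j).2) = a
            ∧ (t.2.2 i).1 = b
            ∧ (t.2.2 i).2 = c1 ∧ f12 t.1 (fun j => (t.2.2 j).1) = c2
            ∧ (fun j : {j : Fin n // j < i} => (t.2.2 j.1).1) = c3
            ∧ (fun j : {j : Fin n // i < j} => (t.2.2 j.1).2) = c4)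
          then pr μ M1 t.1 * pr μ M2 t.2.1 * ∏ j, q (t.2.2 j) else 0 := by
    have hfun : (fun ω => (M21 ω, S1 i ω, S2 i ω, M12 ω,
          (fun j : {j : Fin n // j < i} => S1 j.1 ω),
          (fun j : {j : Fin n // i < j} => S2 j.1 ω)))
        = fun ω => ((fun t : ℳ₁ × ℳ₂ × (Fin n → 𝒮₁ × 𝒮₂) =>
            (f21 t.2.1 (f12 t.1 fun j => (t.2.2 j).1) (fun j => (t.2.2 j).2),
              (t.2.2 i).1, (t.2.2 i).2, f12 t.1 (fun j => (t.2.2 j).1),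
              (fun j : {j : Fin n // j < i} => (t.2.2 j.1).1),
              (fun j : {j : Fin n // i < j} => (t.2.2 j.1).2))) (T ω)) := by
      funext ω
      simp only [hTdef, hM21, hM12]
    rw [hfun, pr_comp μ T (fun t : ℳ₁ × ℳ₂ × (Fin n → 𝒮₁ × 𝒮₂) =>
      (f21 t.2.1 (f12 t.1 fun j => (t.2.2 j).1) (fun j => (t.2.2 j).2),
        (t.2.2 i).1, (t.2.2 i).2, f12 t.1 (fun j => (t.2.2 j).1),
        (fun j : {j : Fin n // j < i} => (t.2.2 j.1).1),
        (fun j : {j : Fin n // i < j} => (t.2.2 j.1).2))) (a, b, c1, c2, c3, c4)]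
    refine Finset.sum_congr rfl fun t _ => ?_
    rw [hT t]
    simp only [Prod.mk.injEq]
  have p2 : pr μ (fun ω => (M21 ω, S2 i ω, M12 ω,
        (fun j : {j : Fin n // j < i} => S1 j.1 ω), (fun j : {j : Fin n // i < j} => S2 j.1 ω)))
      (a, c1, c2, c3, c4)
      = ∑ t : ℳ₁ × ℳ₂ × (Fin n → 𝒮₁ × 𝒮₂),
        if ((f21 t.2.1 (f12 t.1 fun j => (t.2.2 j).1) fun j => (t.2.2 j).2) = a
            ∧ (t.2.2 i).1 = (t.2.2 i).1
            ∧ (t.2.2 i).2 = c1 ∧ f12 t.1 (fun j => (t.2.2 j).1) = c2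
            ∧ (fun j : {j : Fin n // j < i} => (t.2.2 j.1).1) = c3
            ∧ (fun j : {j : Fin n // i < j} => (t.2.2 j.1).2) = c4)
          then pr μ M1 t.1 * pr μ M2 t.2.1 * ∏ j, q (t.2.2 j) else 0 := by
    have hfun : (fun ω => (M21 ω, S2 i ω, M12 ω,
          (fun j : {j : Fin n // j < i} => S1 j.1 ω),
          (fun j : {j : Fin n // i < j} => S2 j.1 ω)))
        = fun ω => ((fun t : ℳ₁ × ℳ₂ × (Fin n → 𝒮₁ × 𝒮₂) =>
            (f21 t.2.1 (f12 t.1 fun j => (t.2.2 j).1) (fun j => (t.2.2 j).2),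
              (t.2.2 i).2, f12 t.1 (fun j => (t.2.2 j).1),
              (fun j : {j : Fin n // j < i} => (t.2.2 j.1).1),
              (fun j : {j : Fin n // i < j} => (t.2.2 j.1).2))) (T ω)) := by
      funext ω
      simp only [hTdef, hM21, hM12]
    rw [hfun, pr_comp μ T (fun t : ℳ₁ × ℳ₂ × (Fin n → 𝒮₁ × 𝒮₂) =>
      (f21 t.2.1 (f12 t.1 fun j => (t.2.2 j).1) (fun j => (t.2.2 j).2),
        (t.2.2 i).2, f12 t.1 (fun j => (t.2.2 j).1),
        (fun j : {j : Fin n // j < i} => (t.2.2 j.1).1),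
        (fun j : {j : Fin n // i < j} => (t.2.2 j.1).2))) (a, c1, c2, c3, c4)]
    refine Finset.sum_congr rfl fun t _ => ?_
    rw [hT t]
    simp only [Prod.mk.injEq, eq_self_iff_true, true_and]
  have p3 : pr μ (fun ω => (S1 i ω, S2 i ω, M12 ω,
        (fun j : {j : Fin n // j < i} => S1 j.1 ω), (fun j : {j : Fin n // i < j} => S2 j.1 ω)))
      (b, c1, c2, c3, c4)
      = ∑ t : ℳ₁ × ℳ₂ × (Fin n → 𝒮₁ × 𝒮₂),
        if ((f21 t.2.1 (f12 t.1 fun j => (t.2.2 j).1) fun j => (t.2.2 j).2)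
              = (f21 t.2.1 (f12 t.1 fun j => (t.2.2 j).1) fun j => (t.2.2 j).2)
            ∧ (t.2.2 i).1 = b
            ∧ (t.2.2 i).2 = c1 ∧ f12 t.1 (fun j => (t.2.2 j).1) = c2
            ∧ (fun j : {j : Fin n // j < i} => (t.2.2 j.1).1) = c3
            ∧ (fun j : {j : Fin n // i < j} => (t.2.2 j.1).2) = c4)
          then pr μ M1 t.1 * pr μ M2 t.2.1 * ∏ j, q (t.2.2 j) else 0 := by
    have hfun : (fun ω => (S1 i ω, S2 i ω, M12 ω,
          (fun j : {j : Fin n // j < i} => S1 j.1 ω),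
          (fun j : {j : Fin n // i < j} => S2 j.1 ω)))
        = fun ω => ((fun t : ℳ₁ × ℳ₂ × (Fin n → 𝒮₁ × 𝒮₂) =>
            ((t.2.2 i).1, (t.2.2 i).2, f12 t.1 (fun j => (t.2.2 j).1),
              (fun j : {j : Fin n // j < i} => (t.2.2 j.1).1),
              (fun j : {j : Fin n // i < j} => (t.2.2 j.1).2))) (T ω)) := by
      funext ω
      simp only [hTdef, hM12]
    rw [hfun, pr_comp μ T (fun t : ℳ₁ × ℳ₂ × (Fin n → 𝒮₁ × 𝒮₂) =>
      ((t.2.2 i).1, (t.2.2 i).2, f12 t.1 (fun j => (t.2.2 j).1),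
        (fun j : {j : Fin n // j < i} => (t.2.2 j.1).1),
        (fun j : {j : Fin n // i < j} => (t.2.2 j.1).2))) (b, c1, c2, c3, c4)]
    refine Finset.sum_congr rfl fun t _ => ?_
    rw [hT t]
    simp only [Prod.mk.injEq, eq_self_iff_true, true_and]
  have p4 : pr μ (fun ω => (S2 i ω, M12 ω,
        (fun j : {j : Fin n // j < i} => S1 j.1 ω), (fun j : {j : Fin n // i < j} => S2 j.1 ω)))
      (c1, c2, c3, c4)
      = ∑ t : ℳ₁ × ℳ₂ × (Fin n → 𝒮₁ × 𝒮₂),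
        if ((f21 t.2.1 (f12 t.1 fun j => (t.2.2 j).1) fun j => (t.2.2 j).2)
              = (f21 t.2.1 (f12 t.1 fun j => (t.2.2 j).1) fun j => (t.2.2 j).2)
            ∧ (t.2.2 i).1 = (t.2.2 i).1
            ∧ (t.2.2 i).2 = c1 ∧ f12 t.1 (fun j => (t.2.2 j).1) = c2
            ∧ (fun j : {j : Fin n // j < i} => (t.2.2 j.1).1) = c3
            ∧ (fun j : {j : Fin n // i < j} => (t.2.2 j.1).2) = c4)
          then pr μ M1 t.1 * pr μ M2 t.2.1 * ∏ j, q (t.2.2 j) else 0 := by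
    have hfun : (fun ω => (S2 i ω, M12 ω,
          (fun j : {j : Fin n // j < i} => S1 j.1 ω),
          (fun j : {j : Fin n // i < j} => S2 j.1 ω)))
        = fun ω => ((fun t : ℳ₁ × ℳ₂ × (Fin n → 𝒮₁ × 𝒮₂) =>
            ((t.2.2 i).2, f12 t.1 (fun j => (t.2.2 j).1),
              (fun j : {j : Fin n // j < i} => (t.2.2 j.1).1),
              (fun j : {j : Fin n // i < j} => (t.2.2 j.1).2))) (T ω)) := by
      funext ω
      simp only [hTdef, hM12]
    rw [hfun, pr_comp μ T (fun t : ℳ₁ × ℳ₂ × (Fin n → 𝒮₁ × 𝒮₂) =>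
      ((t.2.2 i).2, f12 t.1 (fun j => (t.2.2 j).1),
        (fun j : {j : Fin n // j < i} => (t.2.2 j.1).1),
        (fun j : {j : Fin n // i < j} => (t.2.2 j.1).2))) (c1, c2, c3, c4)]
    refine Finset.sum_congr rfl fun t _ => ?_
    rw [hT t]
    simp only [Prod.mk.injEq, eq_self_iff_true, true_and]
  have s1 := split_sum i (pr μ M1) (pr μ M2) q f12 f21 (fun r => r = a) (fun y => y = b) c1 c2 c3 c4
  have s2 := split_sum i (pr μ M1) (pr μ M2) q f12 f21 (fun r => r = a) (fun y => y = y) c1 c2 c3 c4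
  have s3 := split_sum i (pr μ M1) (pr μ M2) q f12 f21 (fun r => r = r) (fun y => y = b) c1 c2 c3 c4
  have s4 := split_sum i (pr μ M1) (pr μ M2) q f12 f21 (fun r => r = r) (fun y => y = y) c1 c2 c3 c4
  rw [p1, p2, p3, p4, s1, s2, s3, s4]
  ring

end Paper
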